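/- Let V(x₁,x₂) = ½(x₁²+x₂²) + x₁²x₂ − ⅓x₂³ be the Hénon–Heiles potential and H(x,y) = ½(y₁²+y₂²) + V(x₁,x₂). At every point (x₁,x₂,y₁,y₂) with H(x₁,x₂,y₁,y₂) = 1/6 and 0 ≤ x₂ < 1, the derivative of H along the radial vector field Z = ½(x₁,x₂,y₁,y₂) satisfies dH·Z = 1/6 + ½x₁²x₂ − (1/6)x₂³ > 0. -/

import Mathlib

/-- The Hénon–Heiles potential. -/
noncomputable def hhV (x₁ x₂ : ℝ) : ℝ := (x₁ ^ 2 + x₂ ^ 2) / 2 + x₁ ^ 2 * x₂ - x₂ ^ 3 / 3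

/-- The Hénon–Heiles Hamiltonian `H = |y|²/2 + V(x)`. -/
noncomputable def hhH (x₁ x₂ y₁ y₂ : ℝ) : ℝ := (y₁ ^ 2 + y₂ ^ 2) / 2 + hhV x₁ x₂

lemma hh_d1 (x₁ x₂ y₁ y₂ : ℝ) : deriv (fun t => hhH t x₂ y₁ y₂) x₁ = x₁ + 2 * x₁ * x₂ := by
  have : HasDerivAt (fun t : ℝ => hhH t x₂ y₁ y₂) (x₁ + 2 * x₁ * x₂) x₁ := by
    simp only [hhH, hhV]
    have h := (hasDerivAt_id x₁)
    have := ((((h.pow 2).add_const (x₂ ^ 2)).div_const 2).add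
      ((h.pow 2).mul_const x₂)).sub_const (x₂ ^ 3 / 3)
    have := this.const_add ((y₁ ^ 2 + y₂ ^ 2) / 2)
    refine this.congr_deriv ?_
    simp only [id_eq]; ring
  exact this.deriv

lemma hh_d2 (x₁ x₂ y₁ y₂ : ℝ) : deriv (fun t => hhH x₁ t y₁ y₂) x₂ = x₂ + x₁ ^ 2 - x₂ ^ 2 := by
  have : HasDerivAt (fun t : ℝ => hhH x₁ t y₁ y₂) (x₂ + x₁ ^ 2 - x₂ ^ 2) x₂ := by
    simp only [hhH, hhV]
    have h := (hasDerivAt_id x₂)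
    have := ((((h.pow 2).const_add (x₁ ^ 2)).div_const 2).add
      (h.const_mul (x₁ ^ 2))).sub ((h.pow 3).div_const 3)
    have := this.const_add ((y₁ ^ 2 + y₂ ^ 2) / 2)
    refine this.congr_deriv ?_
    simp only [id_eq]; ring
  exact this.deriv

lemma hh_d3 (x₁ x₂ y₁ y₂ : ℝ) : deriv (fun t => hhH x₁ x₂ t y₂) y₁ = y₁ := by
  have : HasDerivAt (fun t : ℝ => hhH x₁ x₂ t y₂) y₁ x₁ ∨ True := Or.inr trivial
  have h : HasDerivAt (fun t : ℝ => hhH x₁ x₂ t y₂) y₁ y₁ := by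
    simp only [hhH, hhV]
    have h := (hasDerivAt_id y₁)
    have := (((h.pow 2).add_const (y₂ ^ 2)).div_const 2).add_const (hhV x₁ x₂)
    simp only [hhV] at this
    refine this.congr_deriv ?_
    simp only [id_eq]; ring
  exact h.deriv

lemma hh_d4 (x₁ x₂ y₁ y₂ : ℝ) : deriv (fun t => hhH x₁ x₂ y₁ t) y₂ = y₂ := by
  have h : HasDerivAt (fun t : ℝ => hhH x₁ x₂ y₁ t) y₂ y₂ := by
    simp only [hhH, hhV]
    have h := (hasDerivAt_id y₂)
    have := (((h.pow 2).const_add (y₁ ^ 2)).div_const 2).add_const (hhV x₁ x₂)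
    simp only [hhV] at this
    refine this.congr_deriv ?_
    simp only [id_eq]; ring
  exact h.deriv

/-- At every point of the Hénon–Heiles energy level `H = 1/6` with
`0 ≤ x₂ < 1`, the derivative of `H` along the radial vector field
`Z = ½(x₁,x₂,y₁,y₂)` equals `1/6 + ½x₁²x₂ − x₂³/6` and is positive. -/
theorem henonHeiles_radial_transversality
    (x₁ x₂ y₁ y₂ : ℝ) (hE : hhH x₁ x₂ y₁ y₂ = 1 / 6) (h0 : 0 ≤ x₂) (h1 : x₂ < 1) :
    1 / 2 * (x₁ * deriv (fun t => hhH t x₂ y₁ y₂) x₁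
        + x₂ * deriv (fun t => hhH x₁ t y₁ y₂) x₂
        + y₁ * deriv (fun t => hhH x₁ x₂ t y₂) y₁
        + y₂ * deriv (fun t => hhH x₁ x₂ y₁ t) y₂)
      = 1 / 6 + 1 / 2 * x₁ ^ 2 * x₂ - 1 / 6 * x₂ ^ 3 ∧
    0 < 1 / 6 + 1 / 2 * x₁ ^ 2 * x₂ - 1 / 6 * x₂ ^ 3 := by
  simp only [hhH, hhV] at hE
  constructor
  · rw [hh_d1, hh_d2, hh_d3, hh_d4]
    nlinarith [hE]
  · have hcube : x₂ ^ 3 < 1 := by nlinarith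
    nlinarith [mul_nonneg (sq_nonneg x₁) h0]
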